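/- arXiv:2106.13127 — 2 statements merged into one kernel-verified Lean document; each statement's English description precedes it below -/
import Mathlib

section
/- Let A ∈ ℝ^{n×n} be entrywise nonnegative, and suppose the weighted digraph with an edge from node j to node i whenever A_{ij} > 0 is strongly connected. Let L = D − A, where D is the diagonal matrix with D_{ii} = Σ_j A_{ij}. Then 0 is a simple eigenvalue of L (algebraic multiplicity one), the all-ones vector is a right eigenvector of L for the eigenvalue 0, and there exists a left eigenvector of L for the eigenvalue 0 all of whose entries are strictly positive. -/
open Matrix Polynomial

section PFaux
variable {n : ℕ}

private lemma pow_entry_nonneg (P : Matrix (Fin n) (Fin n) ℝ) (hP : ∀ i j, 0 ≤ P i j) :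
    ∀ m i j, 0 ≤ (P ^ m) i j := by
  intro m
  induction m with
  | zero => intro i j; simp [Matrix.one_apply]; positivity
  | succ m ih =>
    intro i j
    rw [pow_succ, Matrix.mul_apply]
    exact Finset.sum_nonneg fun k _ => mul_nonneg (ih i k) (hP k j)

private lemma pow_entry_pos_succ (P : Matrix (Fin n) (Fin n) ℝ) (hP : ∀ i j, 0 ≤ P i j)
    (hd : ∀ i, 0 < P i i) {m : ℕ} {i j : Fin n} (h : 0 < (P ^ m) i j) :
    0 < (P ^ (m + 1)) i j := by
  rw [pow_succ, Matrix.mul_apply]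
  refine Finset.sum_pos' (fun k _ => mul_nonneg (pow_entry_nonneg P hP m i k) (hP k j))
    ⟨j, Finset.mem_univ j, mul_pos h (hd j)⟩

private lemma exists_pow_entry_pos (P : Matrix (Fin n) (Fin n) ℝ) (hP : ∀ i j, 0 ≤ P i j)
    {i j : Fin n} (hconn : Relation.ReflTransGen (fun a b => 0 < P b a) i j) :
    ∃ m, 0 < (P ^ m) j i := by
  induction hconn with
  | refl => exact ⟨0, by simp [Matrix.one_apply]⟩
  | @tail b c hab hbc ih =>
    obtain ⟨m, hm⟩ := ih
    refine ⟨m + 1, ?_⟩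
    rw [pow_succ', Matrix.mul_apply]
    exact Finset.sum_pos' (fun k _ => mul_nonneg (hP c k) (pow_entry_nonneg P hP m k i))
      ⟨b, Finset.mem_univ b, mul_pos hbc hm⟩

private lemma exists_pow_all_pos (P : Matrix (Fin n) (Fin n) ℝ) (hP : ∀ i j, 0 ≤ P i j)
    (hd : ∀ i, 0 < P i i)
    (hconn : ∀ i j : Fin n, Relation.ReflTransGen (fun a b => 0 < P b a) i j) :
    ∃ m, ∀ i j, 0 < (P ^ m) i j := by
  have key : ∀ p : Fin n × Fin n, ∃ m, 0 < (P ^ m) p.1 p.2 :=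
    fun p => exists_pow_entry_pos P hP (hconn p.2 p.1)
  choose f hf using key
  refine ⟨Finset.univ.sup f, fun i j => ?_⟩
  have hle : f (i, j) ≤ Finset.univ.sup f := Finset.le_sup (Finset.mem_univ _)
  have : ∀ m, f (i, j) ≤ m → 0 < (P ^ m) i j := by
    intro m hm
    induction m, hm using Nat.le_induction with
    | base => exact hf (i, j)
    | succ m hm ih => exact pow_entry_pos_succ P hP hd ih
  exact this _ hle

private lemma fixed_vec_const (W : Matrix (Fin n) (Fin n) ℝ) (hW : ∀ i j, 0 < W i j)
    (hrow : ∀ i, ∑ j, W i j = 1) {x : Fin n → ℝ} (hx : W *ᵥ x = x)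
    (i0 : Fin n) : ∀ j, x j = x i0 := by
  have hne : (Finset.univ : Finset (Fin n)).Nonempty := ⟨i0, Finset.mem_univ _⟩
  obtain ⟨i, -, hi⟩ := Finset.exists_max_image Finset.univ x hne
  have hmax : ∀ j, x j ≤ x i := fun j => hi j (Finset.mem_univ j)
  have hxi : ∑ j, W i j * x j = x i := by
    have := congrFun hx i
    simpa [Matrix.mulVec, dotProduct] using this
  have hEq : ∀ j ∈ Finset.univ, W i j * x j = W i j * x i := by
    by_contra hcon
    push_neg at hcon
    obtain ⟨j, -, hj⟩ := hcon
    have hlt : ∑ j, W i j * x j < ∑ j, W i j * x i := by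
      refine Finset.sum_lt_sum (fun k _ => mul_le_mul_of_nonneg_left (hmax k) (hW i k).le)
        ⟨j, Finset.mem_univ j, lt_of_le_of_ne (mul_le_mul_of_nonneg_left (hmax j) (hW i j).le) hj⟩
    rw [hxi, ← Finset.sum_mul, hrow i, one_mul] at hlt
    exact lt_irrefl _ hlt
  have hconst : ∀ j, x j = x i := by
    intro j
    exact mul_left_cancel₀ (hW i j).ne' (hEq j (Finset.mem_univ j))
  intro j
  rw [hconst j, ← hconst i0]

private lemma left_fixed_sign (W : Matrix (Fin n) (Fin n) ℝ) (hW : ∀ i j, 0 < W i j)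
    (hrow : ∀ i, ∑ j, W i j = 1) {v : Fin n → ℝ} (hv : v ᵥ* W = v)
    (hv0 : v ≠ 0) : (∀ i, 0 < v i) ∨ (∀ i, v i < 0) := by
  have hvj : ∀ j, ∑ i, v i * W i j = v j := by
    intro j
    have := congrFun hv j
    simpa [Matrix.vecMul, dotProduct] using this
  have hle : ∀ j, |v j| ≤ ∑ i, |v i| * W i j := by
    intro j
    calc |v j| = |∑ i, v i * W i j| := by rw [hvj j]
    _ ≤ ∑ i, |v i * W i j| := Finset.abs_sum_le_sum_abs _ _
    _ = ∑ i, |v i| * W i j := by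
        refine Finset.sum_congr rfl fun i _ => ?_
        rw [abs_mul, abs_of_pos (hW i j)]
  have hsum : ∑ j, ∑ i, |v i| * W i j = ∑ j, |v j| := by
    rw [Finset.sum_comm]
    refine Finset.sum_congr rfl fun i _ => ?_
    rw [← Finset.mul_sum, hrow i, mul_one]
  have heq : ∀ j, |v j| = ∑ i, |v i| * W i j := by
    have h := (Finset.sum_eq_sum_iff_of_le (fun j _ => hle j)).mp (by rw [hsum])
    exact fun j => h j (Finset.mem_univ j)
  obtain ⟨k, hk⟩ : ∃ k, v k ≠ 0 := Function.ne_iff.mp hv0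
  have habs : ∀ j, 0 < |v j| := by
    intro j
    rw [heq j]
    exact Finset.sum_pos' (fun i _ => mul_nonneg (abs_nonneg _) (hW i j).le)
      ⟨k, Finset.mem_univ k, mul_pos (abs_pos.mpr hk) (hW k j)⟩
  have hnomix : ¬ (∃ a, 0 < v a) ∨ ¬ (∃ b, v b < 0) := by
    by_contra hcon
    push_neg at hcon
    obtain ⟨⟨a, ha⟩, ⟨b, hb⟩⟩ := hcon
    have h1 : ∑ i, (|v i| - v i) * W i a = 0 := by
      have hha := heq a
      rw [abs_of_pos ha] at hha
      calc ∑ i, (|v i| - v i) * W i a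
          = (∑ i, |v i| * W i a) - ∑ i, v i * W i a := by
            rw [← Finset.sum_sub_distrib]
            exact Finset.sum_congr rfl fun i _ => by ring
        _ = 0 := by rw [← hha, hvj a, sub_self]
    have h2 : 0 < ∑ i, (|v i| - v i) * W i a :=
      Finset.sum_pos' (fun i _ => mul_nonneg (by linarith [le_abs_self (v i)]) (hW i a).le)
        ⟨b, Finset.mem_univ b, mul_pos (by rw [abs_of_neg hb]; linarith) (hW b a)⟩
    rw [h1] at h2; exact lt_irrefl _ h2
  have hne0 : ∀ i, v i ≠ 0 := fun i he => by simpa [he] using habs i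
  rcases hnomix with h | h
  · right
    push_neg at h
    exact fun i => lt_of_le_of_ne (h i) (hne0 i)
  · left
    push_neg at h
    exact fun i => lt_of_le_of_ne (h i) ((hne0 i).symm)

end PFaux

/-- The multiset of eigenvalues (with algebraic multiplicity) of a real matrix,
realized as the roots over `ℂ` of its characteristic polynomial. -/
noncomputable def specEigs {n : Type*} [Fintype n] [DecidableEq n]
    (M : Matrix n n ℝ) : Multiset ℂ :=
  (M.charpoly.map (algebraMap ℝ ℂ)).roots

/-- If `A ∈ ℝ^{n×n}` is entrywise nonnegative and the weighted digraph with
an edge from `j` to `i` whenever `A_{ij} > 0` is strongly connected, then for the Laplacian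
`L = D − A` (with `D_{ii} = Σ_j A_{ij}`): `0` is a simple eigenvalue of `L`, the all-ones
vector is a right eigenvector of `L` for `0`, and there is a strictly positive left
eigenvector of `L` for `0`. -/
theorem laplacian_zero_simple_of_stronglyConnected
    {n : ℕ} (hn : 0 < n) (A : Matrix (Fin n) (Fin n) ℝ)
    (hA : ∀ i j, 0 ≤ A i j)
    -- strong connectivity: a directed path from every node to every node,
    -- where there is an edge from `j` to `i` whenever `A i j > 0`
    (hsc : ∀ i j : Fin n, Relation.ReflTransGen (fun a b => 0 < A b a) i j) :
    (specEigs (Matrix.diagonal (fun i => ∑ j, A i j) - A)).count 0 = 1 ∧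
    (Matrix.diagonal (fun i => ∑ j, A i j) - A) *ᵥ (fun _ => (1 : ℝ)) = 0 ∧
    ∃ u : Fin n → ℝ, (∀ i, 0 < u i) ∧
      u ᵥ* (Matrix.diagonal (fun i => ∑ j, A i j) - A) = 0 := by
  have : NeZero n := ⟨hn.ne'⟩
  set d : Fin n → ℝ := fun i => ∑ j, A i j with hd
  set L : Matrix (Fin n) (Fin n) ℝ := Matrix.diagonal d - A with hLdef
  set ones : Fin n → ℝ := fun _ => (1 : ℝ) with hones
  have i0 : Fin n := ⟨0, hn⟩
  have hones0 : ones ≠ 0 := by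
    intro h
    have := congrFun h i0
    simp [hones] at this
  -- right eigenvector
  have hL1 : L *ᵥ ones = 0 := by
    funext i
    simp [hLdef, Matrix.sub_mulVec, Matrix.mulVec, dotProduct, Matrix.diagonal_apply,
      Finset.sum_ite_eq, hd, hones]
  -- the auxiliary stochastic matrix
  have hdnn : ∀ i, 0 ≤ d i := fun i => Finset.sum_nonneg fun j _ => hA i j
  set S : ℝ := ∑ i, d i with hS
  have hSnn : 0 ≤ S := Finset.sum_nonneg fun i _ => hdnn i
  set ε : ℝ := (1 + S)⁻¹ with hε
  have hεpos : 0 < ε := by positivity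
  have hεd : ∀ i, ε * d i < 1 := by
    intro i
    have h1 : d i ≤ S := Finset.single_le_sum (fun j _ => hdnn j) (Finset.mem_univ i)
    have h2 : d i < 1 + S := by linarith
    calc ε * d i < ε * (1 + S) := by exact mul_lt_mul_of_pos_left h2 hεpos
    _ = 1 := by rw [hε]; field_simp
  set P : Matrix (Fin n) (Fin n) ℝ := 1 - ε • L with hP
  have hPdiag : ∀ i, 0 < P i i := by
    intro i
    have hAii := hA i i
    have := hεd i
    simp only [hP, Matrix.sub_apply, Matrix.smul_apply, Matrix.one_apply_eq, hLdef,
      Matrix.sub_apply, Matrix.diagonal_apply_eq, smul_eq_mul]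
    nlinarith
  have hPnn : ∀ i j, 0 ≤ P i j := by
    intro i j
    rcases eq_or_ne i j with rfl | hij
    · exact (hPdiag i).le
    · simp only [hP, Matrix.sub_apply, Matrix.smul_apply, Matrix.one_apply_ne hij, hLdef,
        Matrix.sub_apply, Matrix.diagonal_apply_ne _ hij, smul_eq_mul]
      have := hA i j
      nlinarith
  have hPedge : ∀ a b : Fin n, 0 < A b a → 0 < P b a := by
    intro a b hab
    rcases eq_or_ne b a with rfl | hba
    · exact hPdiag b
    · simp only [hP, Matrix.sub_apply, Matrix.smul_apply, Matrix.one_apply_ne hba, hLdef,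
        Matrix.sub_apply, Matrix.diagonal_apply_ne _ hba, smul_eq_mul]
      nlinarith
  have hPconn : ∀ i j : Fin n, Relation.ReflTransGen (fun a b => 0 < P b a) i j :=
    fun i j => Relation.ReflTransGen.mono (fun a b h => hPedge a b h) i j (hsc i j)
  have hP1 : P *ᵥ ones = ones := by
    rw [hP, Matrix.sub_mulVec, Matrix.one_mulVec, Matrix.smul_mulVec, hL1, smul_zero,
      sub_zero]
  -- powers of P fix ones and fixed vectors
  have hPpow1 : ∀ m : ℕ, (P ^ m) *ᵥ ones = ones := by
    intro m
    induction m with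
    | zero => simp
    | succ m ih => rw [pow_succ, ← Matrix.mulVec_mulVec, hP1, ih]
  have hkerP : ∀ x : Fin n → ℝ, L *ᵥ x = 0 → P *ᵥ x = x := by
    intro x hx
    rw [hP, Matrix.sub_mulVec, Matrix.one_mulVec, Matrix.smul_mulVec, hx, smul_zero,
      sub_zero]
  have hkerPpow : ∀ (k : ℕ) (x : Fin n → ℝ), L *ᵥ x = 0 → (P ^ k) *ᵥ x = x := by
    intro k x hx
    induction k with
    | zero => simp
    | succ k ih => rw [pow_succ, ← Matrix.mulVec_mulVec, hkerP x hx, ih]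
  obtain ⟨m, hWpos⟩ := exists_pow_all_pos P hPnn hPdiag hPconn
  set W : Matrix (Fin n) (Fin n) ℝ := P ^ m with hW
  have hWrow : ∀ i, ∑ j, W i j = 1 := by
    intro i
    have := congrFun (hPpow1 m) i
    simpa [Matrix.mulVec, dotProduct, hones] using this
  have hkerW : ∀ x : Fin n → ℝ, L *ᵥ x = 0 → W *ᵥ x = x := fun x hx => hkerPpow m x hx
  have hker : ∀ x : Fin n → ℝ, L *ᵥ x = 0 → x ∈ Submodule.span ℝ {ones} := by
    intro x hx
    have hconst := fixed_vec_const W hWpos hWrow (hkerW x hx) i0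
    rw [Submodule.mem_span_singleton]
    exact ⟨x i0, by funext j; simp [hones, hconst j, mul_comm]⟩
  -- left positive eigenvector
  have hdet : L.det = 0 := by
    rw [← Matrix.exists_mulVec_eq_zero_iff]
    exact ⟨ones, hones0, hL1⟩
  obtain ⟨v, hv0, hvL⟩ : ∃ v ≠ 0, v ᵥ* L = 0 := by
    have hdt : Lᵀ.det = 0 := by rw [Matrix.det_transpose]; exact hdet
    obtain ⟨v, hv0, hv⟩ := (Matrix.exists_mulVec_eq_zero_iff).mpr hdt
    exact ⟨v, hv0, by rwa [Matrix.mulVec_transpose] at hv⟩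
  have hvP : v ᵥ* P = v := by
    have hsm : v ᵥ* (ε • L) = ε • (v ᵥ* L) := by
      rw [← Matrix.mulVec_transpose, Matrix.transpose_smul, Matrix.smul_mulVec,
        Matrix.mulVec_transpose]
    rw [hP, Matrix.vecMul_sub, Matrix.vecMul_one, hsm, hvL, smul_zero, sub_zero]
  have hvPpow : ∀ k : ℕ, v ᵥ* (P ^ k) = v := by
    intro k
    induction k with
    | zero => simp
    | succ k ih => rw [pow_succ, ← Matrix.vecMul_vecMul, ih, hvP]
  have hvW : v ᵥ* W = v := hvPpow m
  obtain ⟨u, hupos, huL⟩ : ∃ u : Fin n → ℝ, (∀ i, 0 < u i) ∧ u ᵥ* L = 0 := by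
    rcases left_fixed_sign W hWpos hWrow hvW hv0 with h | h
    · exact ⟨v, h, hvL⟩
    · refine ⟨-v, fun i => by simpa using neg_pos.mpr (h i), ?_⟩
      rw [Matrix.neg_vecMul, hvL, neg_zero]
  -- generalized eigenspace computation
  have hsumu : 0 < ∑ i, u i :=
    Finset.sum_pos (fun i _ => hupos i) ⟨i0, Finset.mem_univ i0⟩
  have hgen : ∀ k : ℕ, ∀ x : Fin n → ℝ, ((Matrix.mulVecLin L) ^ k) x = 0 →
      x ∈ Submodule.span ℝ {ones} := by
    intro k
    induction k with
    | zero => intro x hx; simp at hx; simp [hx]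
    | succ k ih =>
      intro x hx
      rw [pow_succ, Module.End.mul_apply] at hx
      have hLx : (Matrix.mulVecLin L) x ∈ Submodule.span ℝ {ones} := ih _ hx
      rw [Submodule.mem_span_singleton] at hLx
      obtain ⟨c, hc⟩ := hLx
      have hdot : u ⬝ᵥ (L *ᵥ x) = 0 := by
        rw [Matrix.dotProduct_mulVec, huL, zero_dotProduct]
      have hLx0 : L *ᵥ x = 0 := by
        have hLx' : L *ᵥ x = c • ones := by
          rw [← Matrix.mulVecLin_apply, ← hc]
        rw [hLx']
        have : u ⬝ᵥ (c • ones) = c * ∑ i, u i := by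
          simp [dotProduct, hones, Finset.mul_sum, mul_comm]
        have hc0 : c = 0 := by
          rw [hLx'] at hdot
          rw [this] at hdot
          exact (mul_eq_zero.mp hdot).resolve_right hsumu.ne'
        rw [hc0, zero_smul]
      exact hker x hLx0
  have hspan : Module.End.maxGenEigenspace (Matrix.mulVecLin L) 0 = Submodule.span ℝ {ones} := by
    apply le_antisymm
    · intro x hx
      rw [Module.End.mem_maxGenEigenspace] at hx
      obtain ⟨k, hk⟩ := hx
      simp only [zero_smul, sub_zero] at hk
      exact hgen k x hk
    · rw [Submodule.span_singleton_le_iff_mem]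
      rw [Module.End.mem_maxGenEigenspace]
      exact ⟨1, by simp [Matrix.mulVecLin_apply, hL1]⟩
  have hfinrank : Module.finrank ℝ (Module.End.maxGenEigenspace (Matrix.mulVecLin L) 0) = 1 := by
    rw [hspan, finrank_span_singleton hones0]
  have hcp : (Matrix.mulVecLin L).charpoly = L.charpoly := by
    rw [← LinearMap.charpoly_toMatrix (Matrix.mulVecLin L) (Pi.basisFun ℝ (Fin n)),
      LinearMap.toMatrix_eq_toMatrix', ← Matrix.toLin'_apply', LinearMap.toMatrix'_toLin']
  refine ⟨?_, hL1, u, hupos, huL⟩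
  -- the multiplicity computation
  show ((L.charpoly.map (algebraMap ℝ ℂ)).roots).count 0 = 1
  rw [Polynomial.count_roots]
  have h0 : (0 : ℂ) = algebraMap ℝ ℂ 0 := by simp
  rw [h0, ← Polynomial.eq_rootMultiplicity_map (algebraMap ℝ ℂ).injective,
    Polynomial.rootMultiplicity_eq_natTrailingDegree', ← hcp,
    ← LinearMap.finrank_maxGenEigenspace_zero_eq, hfinrank]
end

section
/- Let 𝕃 ∈ ℝ^{n×n} have 0 as a simple eigenvalue whose right eigenvector is the all-ones vector 𝟙 and whose left eigenvector is u ∈ ℝ^n with Σ_p u_p ≠ 0, and suppose every nonzero eigenvalue of 𝕃 has strictly positive real part. Then for every initial condition x(0) ∈ ℝ^n, the solution x(τ) = exp(−τ𝕃) x(0) of the linear consensus dynamics dx/dτ = −𝕃 x converges as τ → ∞ to the consensus state x̄ 𝟙, where x̄ = ( Σ_p u_p x_p(0) ) / ( Σ_{p'} u_{p'} ) is the u-weighted average of the initial states. -/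
open Matrix Polynomial Filter Topology

namespace ConsensusAux

variable {N : ℕ}

lemma exp_mulVec (M : Matrix (Fin N) (Fin N) ℂ) (w : Fin N → ℂ) :
    NormedSpace.exp M *ᵥ w = ∑' j : ℕ, ((j.factorial : ℂ))⁻¹ • (M ^ j *ᵥ w) := by
  letI : SeminormedRing (Matrix (Fin N) (Fin N) ℂ) := Matrix.linftyOpSemiNormedRing
  letI : NormedRing (Matrix (Fin N) (Fin N) ℂ) := Matrix.linftyOpNormedRing
  letI : NormedAlgebra ℂ (Matrix (Fin N) (Fin N) ℂ) := Matrix.linftyOpNormedAlgebra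
  let g : Matrix (Fin N) (Fin N) ℂ →ₗ[ℂ] (Fin N → ℂ) :=
    { toFun := fun A => A *ᵥ w
      map_add' := fun A B => Matrix.add_mulVec A B w
      map_smul' := fun c A => Matrix.smul_mulVec c A w }
  let G : Matrix (Fin N) (Fin N) ℂ →L[ℂ] (Fin N → ℂ) := LinearMap.toContinuousLinearMap g
  have hsum : Summable fun j : ℕ => ((j.factorial : ℂ))⁻¹ • M ^ j := NormedSpace.expSeries_summable' M
  have h1 : NormedSpace.exp M *ᵥ w = G (∑' j : ℕ, ((j.factorial : ℂ))⁻¹ • M ^ j) := by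
    rw [NormedSpace.exp_eq_tsum ℂ]; rfl
  rw [h1, G.map_tsum hsum]
  refine tsum_congr fun j => ?_
  simp [G, g, Matrix.smul_mulVec]

lemma exp_mulVec_of_kernel (M : Matrix (Fin N) (Fin N) ℂ) (w : Fin N → ℂ)
    (hw : M *ᵥ w = 0) : NormedSpace.exp M *ᵥ w = w := by
  rw [exp_mulVec, tsum_eq_single 0]
  · simp [Matrix.one_mulVec]
  · intro j hj
    obtain ⟨i, rfl⟩ := Nat.exists_eq_succ_of_ne_zero hj
    rw [pow_succ, ← Matrix.mulVec_mulVec, hw, Matrix.mulVec_zero, smul_zero]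

lemma scalar_decay (μ : ℂ) (hμ : 0 < μ.re) (j : ℕ) :
    Tendsto (fun τ : ℝ => Complex.exp ((-τ : ℂ) * μ) * (((j.factorial : ℂ))⁻¹ * (-τ : ℂ) ^ j))
      atTop (𝓝 0) := by
  have h1 : Tendsto (fun τ : ℝ => μ.re * τ) atTop atTop :=
    Tendsto.const_mul_atTop hμ tendsto_id
  have h2 := (Real.tendsto_pow_mul_exp_neg_atTop_nhds_zero j).comp h1
  have h3 : Tendsto (fun τ : ℝ => (μ.re ^ j)⁻¹ * ((μ.re * τ) ^ j * Real.exp (-(μ.re * τ))))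
      atTop (𝓝 0) := by simpa using h2.const_mul ((μ.re ^ j)⁻¹)
  have h4 : Tendsto (fun τ : ℝ => (j.factorial : ℝ)⁻¹ *
      ((μ.re ^ j)⁻¹ * ((μ.re * τ) ^ j * Real.exp (-(μ.re * τ))))) atTop (𝓝 0) := by
    simpa using h3.const_mul ((j.factorial : ℝ)⁻¹)
  apply squeeze_zero_norm' ?_ h4
  filter_upwards [eventually_ge_atTop (0 : ℝ)] with τ hτ
  have hrej : μ.re ^ j ≠ 0 := pow_ne_zero _ (ne_of_gt hμ)
  have hnorm : ‖Complex.exp ((-τ : ℂ) * μ) * (((j.factorial : ℂ))⁻¹ * (-τ : ℂ) ^ j)‖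
      = Real.exp (-(μ.re * τ)) * ((j.factorial : ℝ)⁻¹ * τ ^ j) := by
    rw [norm_mul, norm_mul, norm_inv, norm_pow]
    have : ((-τ : ℂ) * μ).re = -(μ.re * τ) := by
      simp [Complex.mul_re]; ring
    rw [Complex.norm_exp, this]
    rw [norm_neg, Complex.norm_real, Real.norm_eq_abs, abs_of_nonneg hτ,
      Complex.norm_natCast]
  rw [hnorm]
  apply le_of_eq
  rw [mul_pow]
  field_simp

lemma exp_smul_one (c : ℂ) :
    NormedSpace.exp (c • (1 : Matrix (Fin N) (Fin N) ℂ)) = Complex.exp c • 1 := by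
  letI : SeminormedRing (Matrix (Fin N) (Fin N) ℂ) := Matrix.linftyOpSemiNormedRing
  letI : NormedRing (Matrix (Fin N) (Fin N) ℂ) := Matrix.linftyOpNormedRing
  letI : NormedAlgebra ℂ (Matrix (Fin N) (Fin N) ℂ) := Matrix.linftyOpNormedAlgebra
  rw [← Algebra.algebraMap_eq_smul_one]
  refine (NormedSpace.algebraMap_exp_comm (𝔸 := Matrix (Fin N) (Fin N) ℂ) c).symm.trans ?_
  rw [Complex.exp_eq_exp_ℂ, Algebra.algebraMap_eq_smul_one]

lemma tendsto_exp_smul_mulVec_genEig (M : Matrix (Fin N) (Fin N) ℂ) (μ : ℂ) (hμ : 0 < μ.re)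
    (k : ℕ) (w : Fin N → ℂ) (hw : ((M - μ • 1) ^ k) *ᵥ w = 0) :
    Tendsto (fun τ : ℝ => NormedSpace.exp ((-τ : ℂ) • M) *ᵥ w) atTop (𝓝 0) := by
  set B : Matrix (Fin N) (Fin N) ℂ := M - μ • 1 with hB
  have key : ∀ τ : ℝ, NormedSpace.exp ((-τ : ℂ) • M) *ᵥ w
      = ∑ j ∈ Finset.range k,
          (Complex.exp ((-τ : ℂ) * μ) * (((j.factorial : ℂ))⁻¹ * (-τ : ℂ) ^ j)) • (B ^ j *ᵥ w) := by
    intro τ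
    have hM : (-τ : ℂ) • M = ((-τ : ℂ) * μ) • (1 : Matrix (Fin N) (Fin N) ℂ) + (-τ : ℂ) • B := by
      rw [hB, smul_sub, smul_smul]
      abel
    have hcomm : Commute (((-τ : ℂ) * μ) • (1 : Matrix (Fin N) (Fin N) ℂ)) ((-τ : ℂ) • B) :=
      ((Commute.one_left B).smul_left _).smul_right _
    rw [hM, Matrix.exp_add_of_commute _ _ hcomm, exp_smul_one, smul_mul_assoc, one_mul,
      Matrix.smul_mulVec, exp_mulVec]
    rw [tsum_eq_sum (s := Finset.range k) ?_]
    · rw [Finset.smul_sum]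
      refine Finset.sum_congr rfl fun j hj => ?_
      rw [_root_.smul_pow, Matrix.smul_mulVec, smul_smul, smul_smul]
      ring_nf
    · intro j hj
      have hjk : k ≤ j := by simpa using hj
      have hBj : B ^ j *ᵥ w = 0 := by
        obtain ⟨m, rfl⟩ : ∃ m, j = m + k := ⟨j - k, by omega⟩
        rw [pow_add, ← Matrix.mulVec_mulVec, hw, Matrix.mulVec_zero]
      rw [_root_.smul_pow, Matrix.smul_mulVec, hBj, smul_zero, smul_zero]
  have hsum : Tendsto (fun τ : ℝ => ∑ j ∈ Finset.range k,
      (Complex.exp ((-τ : ℂ) * μ) * (((j.factorial : ℂ))⁻¹ * (-τ : ℂ) ^ j)) • (B ^ j *ᵥ w))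
      atTop (𝓝 (∑ j ∈ Finset.range k, (0 : Fin N → ℂ))) := by
    refine tendsto_finset_sum _ fun j _ => ?_
    simpa using (scalar_decay μ hμ j).smul_const (B ^ j *ᵥ w)
  simpa using hsum.congr fun τ => (key τ).symm

lemma exp_map_complex (A : Matrix (Fin N) (Fin N) ℝ) :
    (NormedSpace.exp A).map (algebraMap ℝ ℂ) = NormedSpace.exp (A.map (algebraMap ℝ ℂ)) := by
  letI : SeminormedRing (Matrix (Fin N) (Fin N) ℝ) := Matrix.linftyOpSemiNormedRing
  letI : NormedRing (Matrix (Fin N) (Fin N) ℝ) := Matrix.linftyOpNormedRing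
  letI : NormedAlgebra ℝ (Matrix (Fin N) (Fin N) ℝ) := Matrix.linftyOpNormedAlgebra
  letI : SeminormedRing (Matrix (Fin N) (Fin N) ℂ) := Matrix.linftyOpSemiNormedRing
  letI : NormedRing (Matrix (Fin N) (Fin N) ℂ) := Matrix.linftyOpNormedRing
  letI : NormedAlgebra ℝ (Matrix (Fin N) (Fin N) ℂ) := Matrix.linftyOpNormedAlgebra
  letI : NormedAlgebra ℂ (Matrix (Fin N) (Fin N) ℂ) := Matrix.linftyOpNormedAlgebra
  letI : NormedAlgebra ℚ (Matrix (Fin N) (Fin N) ℝ) := Matrix.linftyOpNormedAlgebra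
  letI : NormedAlgebra ℚ (Matrix (Fin N) (Fin N) ℂ) := Matrix.linftyOpNormedAlgebra
  have hcont : Continuous fun M : Matrix (Fin N) (Fin N) ℝ => M.map (algebraMap ℝ ℂ) :=
    Continuous.matrix_map continuous_id (continuous_algebraMap ℝ ℂ)
  have h := NormedSpace.map_exp
    ((algebraMap ℝ ℂ).mapMatrix : Matrix (Fin N) (Fin N) ℝ →+* Matrix (Fin N) (Fin N) ℂ)
    hcont A
  have h2 : NormedSpace.exp (A.map (algebraMap ℝ ℂ))
      = NormedSpace.exp (A.map (algebraMap ℝ ℂ)) :=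
    rfl
  exact h.trans h2

lemma toLin'_pow_apply (B : Matrix (Fin N) (Fin N) ℂ) (k : ℕ) (w : Fin N → ℂ) :
    ((Matrix.toLin' B) ^ k) w = (B ^ k) *ᵥ w := by
  induction k generalizing w with
  | zero => simp [Matrix.one_mulVec]
  | succ k ih =>
      rw [pow_succ, pow_succ, Module.End.mul_apply, Matrix.toLin'_apply, ih (B *ᵥ w),
        Matrix.mulVec_mulVec]

lemma maxGenEig_matrix {μ : ℂ} {w : Fin N → ℂ} (A : Matrix (Fin N) (Fin N) ℂ)
    (h : w ∈ Module.End.maxGenEigenspace (Matrix.toLin' A) μ) :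
    ∃ k : ℕ, ((A - μ • 1) ^ k) *ᵥ w = 0 := by
  rw [Module.End.mem_maxGenEigenspace] at h
  obtain ⟨k, hk⟩ := h
  refine ⟨k, ?_⟩
  have hE : Matrix.toLin' A - μ • (1 : Module.End ℂ (Fin N → ℂ)) = Matrix.toLin' (A - μ • 1) := by
    rw [map_sub, _root_.map_smul, Matrix.toLin'_one]
    rfl
  rw [hE, toLin'_pow_apply] at hk
  exact hk

lemma vecMul_smul_one (v : Fin N → ℂ) (μ : ℂ) :
    v ᵥ* (μ • (1 : Matrix (Fin N) (Fin N) ℂ)) = μ • v := by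
  ext q
  simp [Matrix.vecMul, dotProduct, Matrix.one_apply, mul_ite, Finset.sum_ite_eq,
    mul_comm]

lemma dot_eq_zero_of_genEig {A : Matrix (Fin N) (Fin N) ℂ} {v : Fin N → ℂ}
    (hv : v ᵥ* A = 0) {μ : ℂ} (hμ : μ ≠ 0) {w : Fin N → ℂ} {k : ℕ}
    (hw : ((A - μ • 1) ^ k) *ᵥ w = 0) : v ⬝ᵥ w = 0 := by
  have hstep : v ᵥ* (A - μ • 1) = (-μ) • v := by
    rw [Matrix.vecMul_sub, hv, vecMul_smul_one, zero_sub, neg_smul]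
  have hpow : ∀ m : ℕ, v ᵥ* ((A - μ • 1) ^ m) = ((-μ) ^ m) • v := by
    intro m
    induction m with
    | zero => simp
    | succ m ih =>
        rw [pow_succ, ← Matrix.vecMul_vecMul, ih, Matrix.smul_vecMul, hstep, smul_smul, pow_succ]
  have h0 : v ⬝ᵥ (((A - μ • 1) ^ k) *ᵥ w) = ((-μ) ^ k) * (v ⬝ᵥ w) := by
    rw [dotProduct_mulVec, hpow k, smul_dotProduct, smul_eq_mul]
  rw [hw, dotProduct_zero] at h0
  have hne : (-μ) ^ k ≠ 0 := pow_ne_zero _ (neg_ne_zero.mpr hμ)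
  exact (mul_eq_zero.mp h0.symm).resolve_left hne

end ConsensusAux

/-- If `0` is a simple eigenvalue of `𝕃` with right eigenvector the all-ones
vector and left eigenvector `u` with `Σ_p u_p ≠ 0`, and every nonzero eigenvalue of `𝕃` has
strictly positive real part, then for every initial condition `x(0)` the solution
`x(τ) = exp(−τ𝕃) x(0)` of `dx/dτ = −𝕃x` converges, as `τ → ∞`, to the consensus state
`x̄ 𝟙` with `x̄ = (Σ_p u_p x_p(0)) / (Σ_{p'} u_{p'})`. -/
theorem consensus_convergence
    {n : ℕ} (𝕃 : Matrix (Fin n) (Fin n) ℝ)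
    (hsimple : (specEigs 𝕃).count 0 = 1)
    (hright : 𝕃 *ᵥ (fun _ => (1 : ℝ)) = 0)
    (u : Fin n → ℝ)
    (hleft : u ᵥ* 𝕃 = 0)
    (husum : ∑ p, u p ≠ 0)
    (hspec : ∀ μ ∈ specEigs 𝕃, μ ≠ 0 → 0 < μ.re)
    (x0 : Fin n → ℝ) :
    Tendsto (fun τ : ℝ => (NormedSpace.exp ((-τ) • 𝕃)) *ᵥ x0) atTop
      (𝓝 (fun _ => (∑ p, u p * x0 p) / ∑ p, u p)) := by
  classical
  rcases Nat.eq_zero_or_pos n with hn | hn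
  · exfalso; apply husum; subst hn; simp
  haveI : Nonempty (Fin n) := ⟨⟨0, hn⟩⟩
  set L : Matrix (Fin n) (Fin n) ℂ := 𝕃.map (algebraMap ℝ ℂ) with hL
  set f : Module.End ℂ (Fin n → ℂ) := Matrix.toLin' L with hf
  set uC : Fin n → ℂ := fun p => (u p : ℂ) with huC
  set x0C : Fin n → ℂ := fun p => (x0 p : ℂ) with hx0C
  set one : Fin n → ℂ := fun _ => (1 : ℂ) with hone
  have hLone : L *ᵥ one = 0 := by
    funext p
    have h := congrFun hright p
    simp only [Matrix.mulVec, dotProduct, Pi.zero_apply] at h ⊢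
    simp only [hL, Matrix.map_apply, hone, Complex.coe_algebraMap]
    exact_mod_cast h
  have huL : uC ᵥ* L = 0 := by
    funext q
    have h := congrFun hleft q
    simp only [Matrix.vecMul, dotProduct, Pi.zero_apply] at h ⊢
    simp only [hL, Matrix.map_apply, huC, Complex.coe_algebraMap]
    exact_mod_cast h
  -- characteristic polynomial of the complexified endomorphism
  have hcp : f.charpoly = 𝕃.charpoly.map (algebraMap ℝ ℂ) := by
    rw [← Matrix.charpoly_map, ← LinearMap.charpoly_toMatrix f (Pi.basisFun ℂ (Fin n))]
    congr 1
    rw [LinearMap.toMatrix_eq_toMatrix']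
    exact LinearMap.toMatrix'_toLin' L
  have hsimple' : ((𝕃.charpoly.map (algebraMap ℝ ℂ)).roots).count 0 = 1 := hsimple
  have hfr : Module.finrank ℂ (Module.End.maxGenEigenspace f 0) = 1 := by
    rw [LinearMap.finrank_maxGenEigenspace_zero_eq, ← Polynomial.rootMultiplicity_eq_natTrailingDegree',
      ← Polynomial.count_roots, hcp]
    exact hsimple'
  have honeE : one ∈ Module.End.maxGenEigenspace f 0 := by
    rw [Module.End.mem_maxGenEigenspace]
    refine ⟨1, ?_⟩
    simpa [hf, Matrix.toLin'_apply] using hLone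
  have hone_ne : one ≠ 0 := by
    intro h
    have := congrFun h (Classical.arbitrary (Fin n))
    simp [hone] at this
  have hspan : Module.End.maxGenEigenspace f 0 = Submodule.span ℂ {one} := by
    refine (Submodule.eq_of_le_of_finrank_le ?_ ?_).symm
    · rwa [Submodule.span_singleton_le_iff_mem]
    · rw [hfr, finrank_span_singleton hone_ne]
  -- spectral decomposition of the initial condition
  have hx0top : x0C ∈ ⨆ μ : ℂ, Module.End.maxGenEigenspace f μ := by
    rw [Module.End.iSup_maxGenEigenspace_eq_top f]; trivial
  obtain ⟨d, hd, hdsum⟩ := (Submodule.mem_iSup_iff_exists_finsupp _ _).mp hx0top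
  obtain ⟨c, hc⟩ := Submodule.mem_span_singleton.mp (hspan ▸ hd 0)
  -- positivity of eigenvalues appearing with nonzero component
  have hposof : ∀ μ : ℂ, μ ∈ d.support → μ ≠ 0 → 0 < μ.re := by
    intro μ hμs hμ0
    have hwne : d μ ≠ 0 := Finsupp.mem_support_iff.mp hμs
    obtain ⟨k, hk⟩ := (Module.End.mem_maxGenEigenspace f μ (d μ)).mp (hd μ)
    have hgen : Module.End.HasGenEigenvalue f μ k := by
      rw [Module.End.hasGenEigenvalue_iff]
      intro hbot
      apply hwne
      have hmem : d μ ∈ (Module.End.genEigenspace f μ) (k : ℕ∞) :=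
        Module.End.mem_genEigenspace.mpr ⟨k, le_refl _, hk⟩
      simpa [hbot] using hmem
    have heig := Module.End.hasEigenvalue_of_hasGenEigenvalue hgen
    have hroot : (minpoly ℂ f).IsRoot μ := Module.End.hasEigenvalue_iff_isRoot.mp heig
    have hrootc : f.charpoly.IsRoot μ := hroot.dvd (LinearMap.minpoly_dvd_charpoly f)
    have hmem2 : μ ∈ specEigs 𝕃 := by
      show μ ∈ (𝕃.charpoly.map (algebraMap ℝ ℂ)).roots
      rw [← hcp, Polynomial.mem_roots']
      exact ⟨(LinearMap.charpoly_monic f).ne_zero, hrootc⟩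
    exact hspec μ hmem2 hμ0
  -- convergence of the complexified trajectory
  have hmain : Tendsto (fun τ : ℝ => NormedSpace.exp ((-(τ : ℂ)) • L) *ᵥ x0C) atTop
      (𝓝 (c • one)) := by
    have hsplit : ∀ τ : ℝ, NormedSpace.exp ((-(τ : ℂ)) • L) *ᵥ x0C
        = ∑ μ ∈ d.support, NormedSpace.exp ((-(τ : ℂ)) • L) *ᵥ d μ := by
      intro τ
      rw [← hdsum, Finsupp.sum]
      exact map_sum (Matrix.mulVecLin (NormedSpace.exp ((-(τ : ℂ)) • L))) _ _
    have hterm : ∀ μ ∈ d.support,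
        Tendsto (fun τ : ℝ => NormedSpace.exp ((-(τ : ℂ)) • L) *ᵥ d μ) atTop
          (𝓝 (if μ = 0 then c • one else 0)) := by
      intro μ hμs
      by_cases hμ0 : μ = 0
      · subst hμ0
        rw [if_pos rfl]
        have hfix : ∀ τ : ℝ, NormedSpace.exp ((-(τ : ℂ)) • L) *ᵥ d 0 = c • one := by
          intro τ
          rw [← hc, ConsensusAux.exp_mulVec_of_kernel]
          rw [Matrix.smul_mulVec, Matrix.mulVec_smul, hLone, smul_zero, smul_zero]
        exact tendsto_const_nhds.congr fun τ => (hfix τ).symm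
      · rw [if_neg hμ0]
        obtain ⟨k, hk⟩ := ConsensusAux.maxGenEig_matrix L (hd μ)
        exact ConsensusAux.tendsto_exp_smul_mulVec_genEig L μ (hposof μ hμs hμ0) k (d μ) hk
    have hsum := tendsto_finset_sum d.support hterm
    have hlim : (∑ μ ∈ d.support, if μ = 0 then c • one else (0 : Fin n → ℂ))
        = c • one := by
      rw [Finset.sum_ite_eq' d.support (0 : ℂ) (fun _ => c • one)]
      by_cases h0 : (0 : ℂ) ∈ d.support
      · rw [if_pos h0]
      · rw [if_neg h0]
        have hd0 : d 0 = 0 := Finsupp.notMem_support_iff.mp h0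
        rw [← hc] at hd0
        exact hd0.symm
    rw [hlim] at hsum
    exact hsum.congr fun τ => (hsplit τ).symm
  -- identification of the constant c
  have hdc : (∑ p, uC p * x0C p) = c * (∑ p, uC p) := by
    have h1 : uC ⬝ᵥ x0C = ∑ μ ∈ d.support, uC ⬝ᵥ d μ := by
      rw [← hdsum, Finsupp.sum]
      simp only [dotProduct, Finset.sum_apply, Finset.mul_sum]
      exact Finset.sum_comm
    have h2 : ∀ μ ∈ d.support, uC ⬝ᵥ d μ = if μ = 0 then c * (∑ p, uC p) else 0 := by
      intro μ hμs
      by_cases hμ0 : μ = 0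
      · subst hμ0
        rw [if_pos rfl, ← hc]
        simp only [dotProduct, Pi.smul_apply, hone, smul_eq_mul, mul_one,
          Finset.mul_sum]
        exact Finset.sum_congr rfl fun p _ => by ring
      · rw [if_neg hμ0]
        obtain ⟨k, hk⟩ := ConsensusAux.maxGenEig_matrix L (hd μ)
        exact ConsensusAux.dot_eq_zero_of_genEig huL hμ0 hk
    have h3 : uC ⬝ᵥ x0C = if (0 : ℂ) ∈ d.support then c * (∑ p, uC p) else 0 := by
      rw [h1, Finset.sum_congr rfl h2, Finset.sum_ite_eq' d.support (0 : ℂ)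
        (fun _ => c * (∑ p, uC p))]
    have h4 : uC ⬝ᵥ x0C = c * (∑ p, uC p) := by
      rw [h3]
      by_cases h0 : (0 : ℂ) ∈ d.support
      · rw [if_pos h0]
      · rw [if_neg h0]
        have hd0 : d 0 = 0 := Finsupp.notMem_support_iff.mp h0
        rw [← hc] at hd0
        have hcz : c = 0 := by
          rcases smul_eq_zero.mp hd0 with h | h
          · exact h
          · exact absurd h hone_ne
        rw [hcz, zero_mul]
    exact h4
  have hsuC : (∑ p, uC p) = ((∑ p, u p : ℝ) : ℂ) := by push_cast; rfl
  have hduC : (∑ p, uC p * x0C p) = ((∑ p, u p * x0 p : ℝ) : ℂ) := by push_cast; rfl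
  have hUne : ((∑ p, u p : ℝ) : ℂ) ≠ 0 := Complex.ofReal_ne_zero.mpr husum
  have hcval : c = (((∑ p, u p * x0 p) / (∑ p, u p) : ℝ) : ℂ) := by
    have h := hdc
    rw [hsuC, hduC] at h
    rw [Complex.ofReal_div, h, mul_div_cancel_right₀ _ hUne]
  -- conclusion: pass back to the real trajectory
  have hcast : ∀ τ : ℝ, ∀ p, (((NormedSpace.exp ((-τ) • 𝕃) *ᵥ x0) p : ℝ) : ℂ)
      = (NormedSpace.exp ((-(τ : ℂ)) • L) *ᵥ x0C) p := by
    intro τ p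
    have hmapL : ((-τ) • 𝕃).map (algebraMap ℝ ℂ) = (-(τ : ℂ)) • L := by
      ext i j
      simp only [hL, Matrix.map_apply, Matrix.smul_apply, smul_eq_mul, Complex.coe_algebraMap]
      push_cast
      ring
    rw [← hmapL, ← ConsensusAux.exp_map_complex]
    simp only [Matrix.mulVec, dotProduct, Matrix.map_apply, hx0C, Complex.coe_algebraMap]
    push_cast
    rfl
  rw [tendsto_pi_nhds]
  intro p
  have h1 : Tendsto (fun τ : ℝ => (NormedSpace.exp ((-(τ : ℂ)) • L) *ᵥ x0C) p) atTop
      (𝓝 ((c • one) p)) := tendsto_pi_nhds.mp hmain p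
  have h2 := (Complex.continuous_re.tendsto _).comp h1
  have h3 : ((c • one) p).re = (∑ p, u p * x0 p) / (∑ p, u p) := by
    simp only [Pi.smul_apply, hone, smul_eq_mul, mul_one, hcval, Complex.ofReal_re]
  rw [← h3]
  refine h2.congr fun τ => ?_
  simp only [Function.comp_apply]
  rw [← hcast τ p, Complex.ofReal_re]
end
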